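/- For an n×n matrix A over a field F, the function g₁ : 2^[n] → ℤ defined by g₁(X) = rank(A[X, X̄]) (the rank of the submatrix with rows indexed by X and columns by the complement of X) is submodular: for all X, Y ⊆ [n], g₁(X ∪ Y) + g₁(X ∩ Y) ≤ g₁(X) + g₁(Y). -/

import Mathlib

set_option maxHeartbeats 1000000
set_option synthInstance.maxHeartbeats 400000

open Matrix

/-- The rank of the off-diagonal block `A[X, X̄]`. -/
noncomputable def offDiagRank {n : ℕ} {F : Type*} [Field F]
    (A : Matrix (Fin n) (Fin n) F) (X : Finset (Fin n)) : ℕ :=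
  (A.submatrix (fun i : X => (i : Fin n)) (fun j : (Xᶜ : Finset (Fin n)) => (j : Fin n))).rank

section Aux

variable {n : ℕ} (F : Type*) [Field F]

/-- Span of the rows of `A` indexed by `X`. -/
noncomputable def rowSp (A : Matrix (Fin n) (Fin n) F) (X : Finset (Fin n)) :
    Submodule F (Fin n → F) := Submodule.span F (A '' ↑X)

/-- Span of the standard basis vectors indexed by `X`. -/
noncomputable def eSp (X : Finset (Fin n)) : Submodule F (Fin n → F) :=
  Submodule.span F ((fun i => Pi.single i (1 : F)) '' ↑X)

/-- Projection to coordinates in `Xᶜ`. -/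
noncomputable def projC (X : Finset (Fin n)) :
    (Fin n → F) →ₗ[F] ((Xᶜ : Finset (Fin n)) → F) :=
  LinearMap.funLeft F F (fun j : (Xᶜ : Finset (Fin n)) => (j : Fin n))

lemma eSp_eq_ker (X : Finset (Fin n)) : eSp F X = LinearMap.ker (projC F X) := by
  apply le_antisymm
  · rw [eSp, Submodule.span_le]
    rintro _ ⟨i, hi, rfl⟩
    simp only [SetLike.mem_coe, LinearMap.mem_ker]
    funext j
    have hj : (j : Fin n) ≠ i := by
      intro h
      have := j.2
      rw [Finset.mem_compl] at this
      exact this (h ▸ hi)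
    simp [projC, LinearMap.funLeft, Pi.single_eq_of_ne hj]
  · intro v hv
    have hv' : ∀ j : Fin n, j ∉ X → v j = 0 := by
      intro j hj
      have := congrFun (LinearMap.mem_ker.mp hv) ⟨j, Finset.mem_compl.mpr hj⟩
      simpa [projC, LinearMap.funLeft] using this
    have hsum : (∑ i ∈ X, Pi.single i (v i)) = v := by
      rw [Finset.sum_subset (Finset.subset_univ X)
        (fun x _ hx => by rw [hv' x hx, Pi.single_zero])]
      exact Finset.univ_sum_single v
    rw [← hsum]
    apply Submodule.sum_mem
    intro i hi
    have h2 : Pi.single i (v i) = (v i) • (Pi.single i (1 : F) : Fin n → F) := by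
      funext j
      by_cases hji : j = i <;> simp [Pi.single_apply, hji]
    rw [h2]
    exact Submodule.smul_mem _ _ (Submodule.subset_span ⟨i, hi, rfl⟩)

lemma finrank_eSp (X : Finset (Fin n)) :
    Module.finrank F (eSp F X) = X.card := by
  classical
  have hli : LinearIndependent F (fun i : X => (Pi.single (i : Fin n) (1 : F) : Fin n → F)) := by
    have h := (Pi.basisFun F (Fin n)).linearIndependent
    have h2 := h.comp (fun i : X => (i : Fin n)) Subtype.val_injective
    convert h2 using 2 with i
    simp [Function.comp, Pi.basisFun_apply]
  have hcard := finrank_span_eq_card hli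
  have hr : Set.range (fun i : X => (Pi.single (i : Fin n) (1 : F) : Fin n → F))
      = (fun i => Pi.single i (1 : F)) '' ↑X := by
    ext v
    constructor
    · rintro ⟨i, rfl⟩; exact ⟨i, i.2, rfl⟩
    · rintro ⟨i, hi, rfl⟩; exact ⟨⟨i, hi⟩, rfl⟩
  rw [hr] at hcard
  rw [eSp, hcard, Fintype.card_coe]

lemma map_projC_rowSp (A : Matrix (Fin n) (Fin n) F) (X : Finset (Fin n)) :
    Submodule.map (projC F X) (rowSp F A X)
      = Submodule.span F (Set.range
          (A.submatrix (fun i : X => (i : Fin n))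
            (fun j : (Xᶜ : Finset (Fin n)) => (j : Fin n)))) := by
  rw [rowSp, Submodule.map_span]
  congr 1
  ext v
  constructor
  · rintro ⟨_, ⟨i, hi, rfl⟩, rfl⟩
    exact ⟨⟨i, hi⟩, rfl⟩
  · rintro ⟨i, rfl⟩
    exact ⟨A i, ⟨(i : Fin n), i.2, rfl⟩, rfl⟩

lemma key_identity (A : Matrix (Fin n) (Fin n) F) (X : Finset (Fin n)) :
    Module.finrank F ((rowSp F A X ⊔ eSp F X : Submodule F (Fin n → F)))
      = offDiagRank A X + X.card := by
  classical
  let S : Submodule F (Fin n → F) := rowSp F A X ⊔ eSp F X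
  let π := projC F X
  have hS : S = rowSp F A X ⊔ eSp F X := rfl
  have hrn := LinearMap.finrank_range_add_finrank_ker (π.domRestrict S)
  have hrange : LinearMap.range (π.domRestrict S) = Submodule.map π S :=
    LinearMap.range_domRestrict S π
  have hmap_eSp : Submodule.map π (eSp F X) = ⊥ := by
    rw [eSp_eq_ker]
    apply le_antisymm _ bot_le
    rintro _ ⟨x, hx, rfl⟩
    simpa using hx
  have hmapS : Submodule.map π S = Submodule.map π (rowSp F A X) := by
    rw [hS] at *
    rw [Submodule.map_sup, hmap_eSp, sup_bot_eq]
  have hker : LinearMap.ker (π.domRestrict S) = Submodule.comap S.subtype (eSp F X) := by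
    rw [LinearMap.ker_domRestrict, eSp_eq_ker]
  have hfker : Module.finrank F (LinearMap.ker (π.domRestrict S)) = X.card := by
    rw [hker, (Submodule.comapSubtypeEquivOfLe (le_sup_right : eSp F X ≤ S)).finrank_eq,
      finrank_eSp]
  have hrank : Module.finrank F (Submodule.map π (rowSp F A X)) = offDiagRank A X := by
    rw [map_projC_rowSp, offDiagRank, Matrix.rank_eq_finrank_span_row]
    rfl
  rw [hrange, hmapS, hrank, hfker] at hrn
  rw [← hS]
  omega

lemma rowSp_union (A : Matrix (Fin n) (Fin n) F) (X Y : Finset (Fin n)) :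
    rowSp F A (X ∪ Y) = rowSp F A X ⊔ rowSp F A Y := by
  rw [rowSp, rowSp, rowSp, Finset.coe_union, ← Submodule.span_union]
  exact congrArg (Submodule.span F) (Set.image_union (A : Fin n → Fin n → F) _ _)

lemma eSp_union (X Y : Finset (Fin n)) :
    eSp F (X ∪ Y) = eSp F X ⊔ eSp F Y := by
  rw [eSp, eSp, eSp, Finset.coe_union, Set.image_union, Submodule.span_union]

lemma rowSp_mono (A : Matrix (Fin n) (Fin n) F) {X Y : Finset (Fin n)} (h : X ⊆ Y) :
    rowSp F A X ≤ rowSp F A Y :=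
  Submodule.span_mono (Set.image_mono (Finset.coe_subset.mpr h))

lemma eSp_mono {X Y : Finset (Fin n)} (h : X ⊆ Y) : eSp F X ≤ eSp F Y :=
  Submodule.span_mono (Set.image_mono (Finset.coe_subset.mpr h))

end Aux

/-- The function `X ↦ rank A[X, X̄]` is submodular. -/
theorem offDiagRank_submodular {n : ℕ} {F : Type*} [Field F]
    (A : Matrix (Fin n) (Fin n) F) (X Y : Finset (Fin n)) :
    offDiagRank A (X ∪ Y) + offDiagRank A (X ∩ Y) ≤ offDiagRank A X + offDiagRank A Y := by
  classical
  have hU : rowSp F A (X ∪ Y) ⊔ eSp F (X ∪ Y) = (rowSp F A X ⊔ eSp F X) ⊔ (rowSp F A Y ⊔ eSp F Y) := by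
    rw [rowSp_union, eSp_union]
    exact sup_sup_sup_comm _ _ _ _
  have hI : rowSp F A (X ∩ Y) ⊔ eSp F (X ∩ Y) ≤ (rowSp F A X ⊔ eSp F X) ⊓ (rowSp F A Y ⊔ eSp F Y) := by
    apply le_inf
    · exact sup_le_sup (rowSp_mono F A Finset.inter_subset_left)
        (eSp_mono F Finset.inter_subset_left)
    · exact sup_le_sup (rowSp_mono F A Finset.inter_subset_right)
        (eSp_mono F Finset.inter_subset_right)
  have hsub := Submodule.finrank_sup_add_finrank_inf_eq (rowSp F A X ⊔ eSp F X) (rowSp F A Y ⊔ eSp F Y)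
  have h1 := key_identity F A (X ∪ Y)
  have h2 := key_identity F A (X ∩ Y)
  have h3 := key_identity F A X
  have h4 := key_identity F A Y
  have hle : Module.finrank F (rowSp F A (X ∩ Y) ⊔ eSp F (X ∩ Y) : Submodule F (Fin n → F))
      ≤ Module.finrank F ((rowSp F A X ⊔ eSp F X) ⊓ (rowSp F A Y ⊔ eSp F Y) : Submodule F (Fin n → F)) :=
    Submodule.finrank_mono hI
  rw [hU] at h1
  have hcard := Finset.card_union_add_card_inter X Y
  omega
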